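/- arXiv:1703.09185 — 2 statements merged into one kernel-verified Lean document; each statement's English description precedes it below -/
import Mathlib

section
/- If in addition ∑_{k=1}^∞ α_k² < ∞, then all agents asymptotically reach consensus: lim_{k→∞} max_{j=1,…,n} ‖δ^j_k‖ = 0, and consequently lim_{k→∞} ‖x^i_k − x^j_k‖ = 0 for all pairs of agents i, j. -/
open Filter Finset
open scoped Pointwise



lemma grad_ineq {E : Type*} [NormedAddCommGroup E] [InnerProductSpace ℝ E] [CompleteSpace E]
    {f : E → ℝ} {g : E → E} (hconv : ConvexOn ℝ Set.univ f)
    (hgrad : ∀ z, HasGradientAt f (g z) z) (x y : E) :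
    inner ℝ (g x) (y - x) ≤ f y - f x := by
  set v := y - x with hv
  have hc : HasDerivAt (fun t : ℝ => x + t • v) v 0 := by
    simpa using ((hasDerivAt_id (0:ℝ)).smul_const v).const_add x
  have hD : HasDerivAt (fun t : ℝ => f (x + t • v)) (inner ℝ (g x) v : ℝ) 0 := by
    have h1 : HasFDerivAt f ((InnerProductSpace.toDual ℝ E) (g x)) (x + (0:ℝ) • v) := by
      simpa using (hgrad x).hasFDerivAt
    have h2 := h1.comp_hasDerivAt 0 hc
    exact h2
  have hslope : Tendsto (slope (fun t : ℝ => f (x + t • v)) 0) (nhdsWithin 0 (Set.Ioi 0))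
      (nhds (inner ℝ (g x) v : ℝ)) := by
    have := hasDerivAt_iff_tendsto_slope.1 hD
    exact this.mono_left (nhdsWithin_mono _ (fun t ht => ne_of_gt ht))
  refine le_of_tendsto hslope ?_
  filter_upwards [Ioc_mem_nhdsGT (zero_lt_one)] with t ht
  have ht0 : (0:ℝ) < t := ht.1
  have hcvx := hconv.2 (Set.mem_univ x) (Set.mem_univ y) (by linarith [ht.2] : (0:ℝ) ≤ 1 - t)
    (le_of_lt ht0) (by ring)
  have hxy : x + t • v = (1 - t) • x + t • y := by
    rw [hv]; module
  have hzv : x + (0:ℝ) • v = x := by simp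
  rw [slope_def_field, div_le_iff₀ (by simpa using ht0)]
  calc (f (x + t • v) - f (x + (0:ℝ) • v)) ≤ ((1-t) * f x + t * f y) - f x := by
        rw [hxy, hzv]
        simpa [smul_eq_mul] using sub_le_sub_right hcvx (f x)
      _ = (f y - f x) * (t - 0) := by ring


-- matrix action on vector-valued functions
lemma mat_smul_assoc {E : Type*} [AddCommGroup E] [Module ℝ E] {n : ℕ}
    (A C : Matrix (Fin n) (Fin n) ℝ) (w : Fin n → E) (j : Fin n) :
    ∑ i, (A * C) j i • w i = ∑ l, A j l • ∑ i, C l i • w i := by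
  simp only [Matrix.mul_apply, Finset.sum_smul, Finset.smul_sum, mul_smul]
  exact Finset.sum_comm

lemma zero_sum_bound {E : Type*} [NormedAddCommGroup E] [NormedSpace ℝ E] {n : ℕ}
    (c : Fin n → ℝ) (w : Fin n → E) (hw : ∑ i, w i = 0) (ρ W : ℝ)
    (hc : ∀ i, |c i - 1 / n| ≤ ρ) (hW : ∀ i, ‖w i‖ ≤ W) :
    ‖∑ i, c i • w i‖ ≤ n * (ρ * W) := by
  have key : ∑ i, c i • w i = ∑ i, (c i - 1 / n) • w i := by
    simp only [sub_smul, Finset.sum_sub_distrib]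
    rw [← Finset.smul_sum, hw, smul_zero, sub_zero]
  rw [key]
  calc ‖∑ i, (c i - 1 / n) • w i‖ ≤ ∑ i : Fin n, ‖(c i - 1 / n) • w i‖ :=
        norm_sum_le _ _
    _ ≤ ∑ _i : Fin n, ρ * W := by
        refine Finset.sum_le_sum fun i _ => ?_
        rw [norm_smul, Real.norm_eq_abs]
        have h0 : (0:ℝ) ≤ ‖w i‖ := norm_nonneg _
        have := hc i
        exact mul_le_mul this (hW i) h0 (le_trans (abs_nonneg _) this)
    _ = n * (ρ * W) := by simp [mul_comm]

-- convolution tendsto lemma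
lemma conv_tendsto (a : ℕ → ℝ) (ha0 : ∀ s, 1 ≤ s → 0 ≤ a s)
    (hmono : ∀ s t, 1 ≤ s → s ≤ t → a t ≤ a s)
    (ha : Filter.Tendsto a Filter.atTop (nhds 0)) (β : ℝ) (hβ0 : 0 < β) (hβ1 : β < 1) :
    Filter.Tendsto (fun k => ∑ s ∈ Finset.Ioc 0 k, β ^ (k - s) * a s)
      Filter.atTop (nhds 0) := by
  have hdiv : Tendsto (fun k : ℕ => k / 2) atTop atTop :=
    Filter.tendsto_atTop_atTop.2 fun b => ⟨2 * b, fun a ha => by omega⟩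
  -- upper bound U
  have hU : Tendsto (fun k : ℕ => (2 * (k/2 : ℕ) + 1 : ℝ) * β ^ (k/2) * a 1
      + a (k/2 + 1) * (1 - β)⁻¹) atTop (nhds 0) := by
    have h1 : Tendsto (fun m : ℕ => (2 * (m:ℝ) + 1) * β ^ m) atTop (nhds 0) := by
      have hs : Summable (fun m : ℕ => (m:ℝ) ^ 1 * β ^ m) :=
        summable_pow_mul_geometric_of_norm_lt_one 1 (by rw [Real.norm_eq_abs, abs_of_pos hβ0]; exact hβ1)
      have h1a : Tendsto (fun m : ℕ => (m:ℝ) * β ^ m) atTop (nhds 0) := by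
        simpa using hs.tendsto_atTop_zero
      have h1b : Tendsto (fun m : ℕ => β ^ m) atTop (nhds 0) :=
        tendsto_pow_atTop_nhds_zero_of_lt_one hβ0.le hβ1
      have h := (h1a.const_mul 2).add h1b
      rw [(by norm_num : (0:ℝ) = 2 * 0 + 0)]
      exact h.congr fun m => by ring
    have h2 : Tendsto (fun k : ℕ => (2 * ((k/2 : ℕ):ℝ) + 1) * β ^ (k/2)) atTop (nhds 0) :=
      h1.comp hdiv
    have h3 : Tendsto (fun k : ℕ => a (k/2 + 1)) atTop (nhds 0) :=
      ha.comp ((tendsto_add_atTop_nat 1).comp hdiv)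
    have := (h2.mul_const (a 1)).add (h3.mul_const (1 - β)⁻¹)
    simpa using this
  refine squeeze_zero' ?_ ?_ hU
  · filter_upwards [eventually_ge_atTop 1] with k hk
    exact Finset.sum_nonneg fun s hs => mul_nonneg (pow_nonneg hβ0.le _)
      (ha0 s (Finset.mem_Ioc.1 hs).1)
  · filter_upwards [eventually_ge_atTop 1] with k hk
    have hm : k / 2 ≤ k := Nat.div_le_self k 2
    rw [← Finset.sum_Ioc_consecutive _ (Nat.zero_le (k/2)) hm]
    have hT1 : ∑ s ∈ Finset.Ioc 0 (k/2), β ^ (k - s) * a s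
        ≤ (2 * (k/2 : ℕ) + 1 : ℝ) * β ^ (k/2) * a 1 := by
      calc ∑ s ∈ Finset.Ioc 0 (k/2), β ^ (k - s) * a s
          ≤ ∑ _s ∈ Finset.Ioc 0 (k/2), β ^ (k/2) * a 1 := by
            refine Finset.sum_le_sum fun s hs => ?_
            obtain ⟨hs1, hs2⟩ := Finset.mem_Ioc.1 hs
            have hexp : k / 2 ≤ k - s := by omega
            exact mul_le_mul (pow_le_pow_of_le_one hβ0.le hβ1.le hexp)
              (hmono 1 s le_rfl hs1) (ha0 s hs1)
              (pow_nonneg hβ0.le _)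
        _ = (k/2 : ℕ) * (β ^ (k/2) * a 1) := by
            rw [Finset.sum_const, Nat.card_Ioc]; simp
        _ ≤ (2 * (k/2 : ℕ) + 1 : ℝ) * (β ^ (k/2) * a 1) := by
            refine mul_le_mul_of_nonneg_right (by push_cast; linarith [Nat.cast_nonneg (α := ℝ) (k/2)])
              (mul_nonneg (pow_nonneg hβ0.le _) (ha0 1 le_rfl))
        _ = (2 * (k/2 : ℕ) + 1 : ℝ) * β ^ (k/2) * a 1 := by ring
    have hT2 : ∑ s ∈ Finset.Ioc (k/2) k, β ^ (k - s) * a s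
        ≤ a (k/2 + 1) * (1 - β)⁻¹ := by
      have ha1 : 0 ≤ a (k/2 + 1) := ha0 _ (by omega)
      calc ∑ s ∈ Finset.Ioc (k/2) k, β ^ (k - s) * a s
          ≤ ∑ s ∈ Finset.Ioc (k/2) k, a (k/2 + 1) * β ^ (k - s) := by
            refine Finset.sum_le_sum fun s hs => ?_
            obtain ⟨hs1, hs2⟩ := Finset.mem_Ioc.1 hs
            rw [mul_comm (a (k/2+1))]
            exact mul_le_mul_of_nonneg_left (hmono (k/2+1) s (by omega) (by omega))
              (pow_nonneg hβ0.le _)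
        _ = a (k/2 + 1) * ∑ s ∈ Finset.Ioc (k/2) k, β ^ (k - s) := by
            rw [Finset.mul_sum]
        _ ≤ a (k/2 + 1) * (1 - β)⁻¹ := by
            refine mul_le_mul_of_nonneg_left ?_ ha1
            have hre : ∑ s ∈ Finset.Ioc (k/2) k, β ^ (k - s)
                = ∑ t ∈ Finset.range (k - k/2), β ^ t := by
              refine Finset.sum_nbij' (fun s => k - s) (fun t => k - t) ?_ ?_ ?_ ?_ ?_
              · intro s hs; obtain ⟨h1, h2⟩ := Finset.mem_Ioc.1 hs
                simp only [Finset.mem_range]; omega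
              · intro t ht; have := Finset.mem_range.1 ht
                simp only [Finset.mem_Ioc]; omega
              · intro s hs; have := Finset.mem_Ioc.1 hs; omega
              · intro t ht; have := Finset.mem_range.1 ht; omega
              · intro s hs; rfl
            rw [hre]
            calc ∑ t ∈ Finset.range (k - k/2), β ^ t
                ≤ ∑' t : ℕ, β ^ t := Summable.sum_le_tsum _ (fun t _ => pow_nonneg hβ0.le _)
                  (summable_geometric_of_lt_one hβ0.le hβ1)
              _ = (1 - β)⁻¹ := tsum_geometric_of_lt_one hβ0.le hβ1
    linarith
/-- Consensus Claim: if ∑ α_k² < ∞, the maximum disagreement vanishes and all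
pairs of agents asymptotically agree. -/
theorem stmt_4
    (n D : ℕ) (hn : 1 ≤ n) (hD : 1 ≤ D)
    (L N Δ : ℝ) (hL : 0 ≤ L) (hN : 0 ≤ N) (hΔ : 0 ≤ Δ)
    (X : Set (EuclideanSpace ℝ (Fin D)))
    (hXne : X.Nonempty) (hXcompact : IsCompact X) (hXconvex : Convex ℝ X)
    (P : EuclideanSpace ℝ (Fin D) → EuclideanSpace ℝ (Fin D))
    (hP : ∀ z, P z ∈ X ∧ ∀ y ∈ X, ‖z - P z‖ ≤ ‖z - y‖)
    (f : Fin n → EuclideanSpace ℝ (Fin D) → ℝ)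
    (g : Fin n → EuclideanSpace ℝ (Fin D) → EuclideanSpace ℝ (Fin D))
    (hfconv : ∀ j, ConvexOn ℝ Set.univ (f j))
    (hfgrad : ∀ j z, HasGradientAt (f j) (g j z) z)
    (hgbound : ∀ j, ∀ z ∈ X, ‖g j z‖ ≤ L)
    (hglip : ∀ j, ∀ z ∈ X, ∀ w ∈ X, ‖g j z - g j w‖ ≤ N * ‖z - w‖)
    (α : ℕ → ℝ) (hαpos : ∀ k, 1 ≤ k → 0 < α k)
    (hαmono : ∀ k, 1 ≤ k → α (k + 1) ≤ α k)
    (B : ℕ → Matrix (Fin n) (Fin n) ℝ)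
    (hBnn : ∀ k i j, 1 ≤ k → 0 ≤ B k i j)
    (hBrow : ∀ k i, 1 ≤ k → ∑ j, B k i j = 1)
    (hBcol : ∀ k j, 1 ≤ k → ∑ i, B k i j = 1)
    (Φ : ℕ → ℕ → Matrix (Fin n) (Fin n) ℝ)
    (hΦdiag : ∀ s, 1 ≤ s → Φ s s = B s)
    (hΦrec : ∀ k s, 1 ≤ s → s ≤ k → Φ (k + 1) s = B (k + 1) * Φ k s)
    (θ β : ℝ) (hθ : 0 < θ) (hβ0 : 0 < β) (hβ1 : β < 1)
    (hΦbound : ∀ k s i j, 1 ≤ s → s ≤ k →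
      |Φ k s i j - 1 / n| ≤ θ * β ^ (k - s + 1))
    (e : ℕ → Fin n → EuclideanSpace ℝ (Fin D))
    (hebound : ∀ k j, 1 ≤ k → ‖e k j‖ ≤ Δ)
    (hesum : ∀ k, 1 ≤ k → ∑ j, e k j = 0)
    (x : ℕ → Fin n → EuclideanSpace ℝ (Fin D))
    (hx1 : ∀ j, x 1 j ∈ X)
    (hupdate : ∀ k j, 1 ≤ k →
      x (k + 1) j = P ((∑ i, B k j i • x k i) -
        α k • (g j ((∑ i, B k j i • x k i) + α k • e k j) - e k j)))
    (hαsq : Summable fun k => α (k + 1) ^ 2)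
    : Filter.Tendsto (fun k => ⨆ j, ‖x k j - (n : ℝ)⁻¹ • ∑ i, x k i‖)
        Filter.atTop (nhds 0) ∧
      ∀ i j, Filter.Tendsto (fun k => ‖x k i - x k j‖) Filter.atTop (nhds 0) := by
  classical
  have hnfin : Nonempty (Fin n) := ⟨⟨0, hn⟩⟩
  have hnR : (0:ℝ) < n := by exact_mod_cast hn
  have hnne : (n:ℝ) ≠ 0 := ne_of_gt hnR
  -- iterates stay in X
  have hxX : ∀ k, 1 ≤ k → ∀ j, x k j ∈ X := by
    intro k hk
    induction k, hk using Nat.le_induction with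
    | base => exact hx1
    | succ m hm ih => intro j; rw [hupdate m j hm]; exact (hP _).1
  have hvX : ∀ k, 1 ≤ k → ∀ j, (∑ i, B k j i • x k i) ∈ X := fun k hk j =>
    hXconvex.sum_mem (fun i _ => hBnn k j i hk) (hBrow k j hk) (fun i _ => hxX k hk i)
  -- stepsize facts
  have hαle : ∀ s t, 1 ≤ s → s ≤ t → α t ≤ α s := by
    intro s t hs hst
    induction t, hst using Nat.le_induction with
    | base => exact le_rfl
    | succ m hm ih => exact le_trans (hαmono m (le_trans hs hm)) ih
  have hα0 : Tendsto α atTop (nhds 0) := by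
    have h1 : Tendsto (fun k => α (k+1) ^ 2) atTop (nhds 0) := hαsq.tendsto_atTop_zero
    have h2 : Tendsto (fun k => α (k+1)) atTop (nhds 0) := by
      have h3 : Tendsto (fun k => Real.sqrt (α (k+1)^2)) atTop (nhds (Real.sqrt 0)) :=
        (Real.continuous_sqrt.tendsto 0).comp h1
      rw [Real.sqrt_zero] at h3
      exact h3.congr fun k => by
        rw [Real.sqrt_sq_eq_abs, abs_of_pos (hαpos (k+1) (by omega))]
    exact (tendsto_add_atTop_iff_nat 1).1 h2
  -- bound on X
  obtain ⟨R0, hR0⟩ := isBounded_iff_forall_norm_le.1 hXcompact.isBounded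
  obtain ⟨x0, hx0⟩ := hXne
  have hR0nn : 0 ≤ R0 := le_trans (norm_nonneg x0) (hR0 x0 hx0)
  -- uniform gradient bound near X
  have hr0 : 0 ≤ α 1 * Δ := mul_nonneg (hαpos 1 le_rfl).le hΔ
  set K' : Set (EuclideanSpace ℝ (Fin D)) :=
    X + Metric.closedBall (0 : EuclideanSpace ℝ (Fin D)) (α 1 * Δ + 1) with hK'def
  have hK'c : IsCompact K' := hXcompact.add (isCompact_closedBall 0 _)
  have hK'ne : K'.Nonempty := ⟨x0 + 0, Set.add_mem_add hx0 (Metric.mem_closedBall_self (by linarith))⟩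
  have hmemK' : ∀ w ∈ X, ∀ u : EuclideanSpace ℝ (Fin D), ‖u‖ ≤ α 1 * Δ + 1 → w + u ∈ K' :=
    fun w hw u hu => Set.add_mem_add hw (mem_closedBall_zero_iff.2 hu)
  have hfc : ∀ j, Continuous (f j) :=
    fun j => continuous_iff_continuousAt.2 fun z => (hfgrad j z).differentiableAt.continuousAt
  have hgb : ∀ j : Fin n, ∃ Mj : ℝ, ∀ w ∈ X, ∀ u : EuclideanSpace ℝ (Fin D),
      ‖u‖ ≤ α 1 * Δ → ‖g j (w + u)‖ ≤ Mj := by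
    intro j
    obtain ⟨zM, hzM, hmax⟩ := hK'c.exists_isMaxOn hK'ne (hfc j).continuousOn
    obtain ⟨zm, hzm, hmin⟩ := hK'c.exists_isMinOn hK'ne (hfc j).continuousOn
    refine ⟨f j zM - f j zm, ?_⟩
    intro w hw u hu
    set v := w + u with hvdef
    have hvK' : v ∈ K' := hmemK' w hw u (by linarith)
    by_cases h0 : g j v = 0
    · rw [h0, norm_zero]
      exact sub_nonneg.2 (hmin hzM)
    · set q := ‖g j v‖⁻¹ • g j v with hqdef
      have hgne : ‖g j v‖ ≠ 0 := norm_ne_zero_iff.2 h0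
      have hq1 : ‖q‖ = 1 := by
        rw [hqdef, norm_smul, norm_inv, norm_norm, inv_mul_cancel₀ hgne]
      have hvqK' : v + q ∈ K' := by
        have : v + q = w + (u + q) := by rw [hvdef]; abel
        rw [this]
        refine hmemK' w hw (u + q) ?_
        calc ‖u + q‖ ≤ ‖u‖ + ‖q‖ := norm_add_le _ _
          _ ≤ α 1 * Δ + 1 := by rw [hq1]; linarith
      have hgi := grad_ineq (hfconv j) (hfgrad j) v (v + q)
      rw [add_sub_cancel_left] at hgi
      have hinner : (inner ℝ (g j v) q : ℝ) = ‖g j v‖ := by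
        rw [hqdef, real_inner_smul_right, real_inner_self_eq_norm_sq]
        field_simp
      rw [hinner] at hgi
      have h1 : f j (v + q) ≤ f j zM := hmax hvqK'
      have h2 : f j zm ≤ f j v := hmin hvK'
      linarith
  choose Mf hMf using hgb
  set M : ℝ := Finset.univ.sup' Finset.univ_nonempty Mf with hMdef
  have hM : ∀ (j : Fin n), ∀ w ∈ X, ∀ u : EuclideanSpace ℝ (Fin D),
      ‖u‖ ≤ α 1 * Δ → ‖g j (w + u)‖ ≤ M := by
    intro j w hw u hu
    exact le_trans (hMf j w hw u hu) (Finset.le_sup' Mf (Finset.mem_univ j))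
  have hM0 : 0 ≤ M := by
    have := hM (Classical.arbitrary (Fin n)) x0 hx0 0 (by simpa using hr0)
    simpa using le_trans (norm_nonneg _) this
  -- the consensus error terms
  set C : ℝ := 2 * (M + Δ) with hCdef
  have hC0 : 0 ≤ C := by rw [hCdef]; linarith
  set ε' : ℕ → Fin n → EuclideanSpace ℝ (Fin D) :=
    fun k j => x (k+1) j - ∑ i, B k j i • x k i with hε'def
  have hxk1 : ∀ k, 1 ≤ k → ∀ j, x (k+1) j = (∑ i, B k j i • x k i) + ε' k j := by
    intro k hk j; rw [hε'def]; module
  have hεb : ∀ k, 1 ≤ k → ∀ j, ‖ε' k j‖ ≤ C * α k := by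
    intro k hk j
    have hkα : 0 < α k := hαpos k hk
    set vh := ∑ i, B k j i • x k i with hvhdef
    have hvhX : vh ∈ X := hvX k hk j
    set z := vh - α k • (g j (vh + α k • e k j) - e k j) with hzdef
    have hx' : x (k+1) j = P z := hupdate k j hk
    have h1 : ‖z - P z‖ ≤ ‖z - vh‖ := (hP z).2 vh hvhX
    have h2 : ‖z - vh‖ = α k * ‖g j (vh + α k • e k j) - e k j‖ := by
      rw [hzdef]
      rw [sub_sub_cancel_left, norm_neg, norm_smul, Real.norm_eq_abs, abs_of_pos hkα]
    have hαkΔ : ‖α k • e k j‖ ≤ α 1 * Δ := by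
      rw [norm_smul, Real.norm_eq_abs, abs_of_pos hkα]
      exact mul_le_mul (hαle 1 k le_rfl hk) (hebound k j hk) (norm_nonneg _) (hαpos 1 le_rfl).le
    have hgv : ‖g j (vh + α k • e k j)‖ ≤ M := hM j vh hvhX _ hαkΔ
    have h3 : ‖g j (vh + α k • e k j) - e k j‖ ≤ M + Δ := by
      calc ‖g j (vh + α k • e k j) - e k j‖ ≤ ‖g j (vh + α k • e k j)‖ + ‖e k j‖ :=
            norm_sub_le _ _
        _ ≤ M + Δ := add_le_add hgv (hebound k j hk)
    have h4 : ‖ε' k j‖ = ‖P z - vh‖ := by rw [hε'def]; simp only []; rw [hx', hvhdef]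
    rw [h4]
    calc ‖P z - vh‖ ≤ ‖P z - z‖ + ‖z - vh‖ := norm_sub_le_norm_sub_add_norm_sub _ _ _
      _ ≤ ‖z - vh‖ + ‖z - vh‖ := by rw [norm_sub_rev (P z) z]; linarith
      _ = 2 * (α k * ‖g j (vh + α k • e k j) - e k j‖) := by rw [h2]; ring
      _ ≤ 2 * (α k * (M + Δ)) := by
          refine mul_le_mul_of_nonneg_left (mul_le_mul_of_nonneg_left h3 hkα.le) (by norm_num)
      _ = C * α k := by rw [hCdef]; ring
  set η' : ℕ → Fin n → EuclideanSpace ℝ (Fin D) :=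
    fun k j => ε' k j - (n:ℝ)⁻¹ • ∑ i, ε' k i with hη'def
  have hηb : ∀ k, 1 ≤ k → ∀ j, ‖η' k j‖ ≤ 2 * C * α k := by
    intro k hk j
    have hsum : ‖∑ i, ε' k i‖ ≤ n * (C * α k) := by
      calc ‖∑ i, ε' k i‖ ≤ ∑ i : Fin n, ‖ε' k i‖ := norm_sum_le _ _
        _ ≤ ∑ _i : Fin n, C * α k := Finset.sum_le_sum fun i _ => hεb k hk i
        _ = n * (C * α k) := by simp [mul_comm]
    calc ‖η' k j‖ ≤ ‖ε' k j‖ + ‖(n:ℝ)⁻¹ • ∑ i, ε' k i‖ := norm_sub_le _ _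
      _ ≤ C * α k + (n:ℝ)⁻¹ * (n * (C * α k)) := by
          refine add_le_add (hεb k hk j) ?_
          rw [norm_smul, Real.norm_eq_abs, abs_of_pos (by positivity)]
          exact mul_le_mul_of_nonneg_left hsum (by positivity)
      _ = 2 * C * α k := by field_simp; ring
  have hηsum : ∀ k, ∑ i, η' k i = 0 := by
    intro k
    rw [hη'def]
    simp only [Finset.sum_sub_distrib, Finset.sum_const, Finset.card_univ, Fintype.card_fin]
    rw [← Nat.cast_smul_eq_nsmul ℝ, smul_smul, mul_inv_cancel₀ hnne, one_smul, sub_self]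
  set δ' : ℕ → Fin n → EuclideanSpace ℝ (Fin D) :=
    fun k j => x k j - (n:ℝ)⁻¹ • ∑ i, x k i with hδ'def
  have hδsum : ∀ k, ∑ i, δ' k i = 0 := by
    intro k
    rw [hδ'def]
    simp only [Finset.sum_sub_distrib, Finset.sum_const, Finset.card_univ, Fintype.card_fin]
    rw [← Nat.cast_smul_eq_nsmul ℝ, smul_smul, mul_inv_cancel₀ hnne, one_smul, sub_self]
  have hδ1b : ∀ i, ‖δ' 1 i‖ ≤ 2 * R0 := by
    intro i
    have hs : ‖∑ l, x 1 l‖ ≤ n * R0 := by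
      calc ‖∑ l, x 1 l‖ ≤ ∑ l : Fin n, ‖x 1 l‖ := norm_sum_le _ _
        _ ≤ ∑ _l : Fin n, R0 := Finset.sum_le_sum fun l _ => hR0 _ (hx1 l)
        _ = n * R0 := by simp [mul_comm]
    calc ‖δ' 1 i‖ ≤ ‖x 1 i‖ + ‖(n:ℝ)⁻¹ • ∑ l, x 1 l‖ := norm_sub_le _ _
      _ ≤ R0 + (n:ℝ)⁻¹ * (n * R0) := by
          refine add_le_add (hR0 _ (hx1 i)) ?_
          rw [norm_smul, Real.norm_eq_abs, abs_of_pos (by positivity)]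
          exact mul_le_mul_of_nonneg_left hs (by positivity)
      _ = 2 * R0 := by field_simp; ring
  -- one-step recursion for disagreements
  have hrec : ∀ k, 1 ≤ k → ∀ j, δ' (k+1) j = (∑ i, B k j i • δ' k i) + η' k j := by
    intro k hk j
    have hsx : ∑ i, x (k+1) i = (∑ i, x k i) + ∑ i, ε' k i := by
      rw [Finset.sum_congr rfl (fun i _ => hxk1 k hk i), Finset.sum_add_distrib]
      congr 1
      rw [Finset.sum_comm]
      refine Finset.sum_congr rfl fun l _ => ?_
      rw [← Finset.sum_smul, hBcol k l hk, one_smul]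
    have hBd : ∑ i, B k j i • δ' k i
        = (∑ i, B k j i • x k i) - (n:ℝ)⁻¹ • ∑ l, x k l := by
      rw [hδ'def]
      simp only [smul_sub, Finset.sum_sub_distrib]
      congr 1
      rw [← Finset.sum_smul, hBrow k j hk, one_smul]
    rw [hδ'def, hη'def]
    simp only []
    rw [hsx, hxk1 k hk j, hBd, smul_add]
    abel
  -- unrolled representation
  have hunroll : ∀ k, 1 ≤ k → ∀ j, δ' (k+1) j =
      (∑ i, Φ k 1 j i • δ' 1 i) +
      (∑ s ∈ Finset.Ioc 0 (k-1), ∑ i, Φ k (s+1) j i • η' s i) + η' k j := by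
    intro k hk
    induction k, hk using Nat.le_induction with
    | base =>
      intro j
      have h0 : (1:ℕ) - 1 = 0 := rfl
      rw [h0, Finset.Ioc_self, Finset.sum_empty, add_zero, hΦdiag 1 le_rfl]
      exact hrec 1 le_rfl j
    | succ m hm ih =>
      intro j
      rw [hrec (m+1) (by omega) j]
      have hsub : ∑ i, B (m+1) j i • δ' (m+1) i
          = ∑ i, B (m+1) j i • ((∑ l, Φ m 1 i l • δ' 1 l) +
            (∑ s ∈ Finset.Ioc 0 (m-1), ∑ l, Φ m (s+1) i l • η' s l) + η' m i) :=
        Finset.sum_congr rfl fun i _ => by rw [ih i]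
      rw [hsub]
      simp only [smul_add, Finset.sum_add_distrib]
      have hA : ∑ i, B (m+1) j i • ∑ l, Φ m 1 i l • δ' 1 l
          = ∑ l, Φ (m+1) 1 j l • δ' 1 l := by
        rw [hΦrec m 1 le_rfl hm, mat_smul_assoc]
      have hB2 : ∑ i, B (m+1) j i • (∑ s ∈ Finset.Ioc 0 (m-1), ∑ l, Φ m (s+1) i l • η' s l)
          = ∑ s ∈ Finset.Ioc 0 (m-1), ∑ l, Φ (m+1) (s+1) j l • η' s l := by
        calc ∑ i, B (m+1) j i • (∑ s ∈ Finset.Ioc 0 (m-1), ∑ l, Φ m (s+1) i l • η' s l)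
            = ∑ i, ∑ s ∈ Finset.Ioc 0 (m-1), B (m+1) j i • ∑ l, Φ m (s+1) i l • η' s l := by
              refine Finset.sum_congr rfl fun i _ => Finset.smul_sum
          _ = ∑ s ∈ Finset.Ioc 0 (m-1), ∑ i, B (m+1) j i • ∑ l, Φ m (s+1) i l • η' s l :=
              Finset.sum_comm
          _ = ∑ s ∈ Finset.Ioc 0 (m-1), ∑ l, Φ (m+1) (s+1) j l • η' s l := by
              refine Finset.sum_congr rfl fun s hs => ?_
              obtain ⟨hs1, hs2⟩ := Finset.mem_Ioc.1 hs
              rw [hΦrec m (s+1) (by omega) (by omega), mat_smul_assoc]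
      have hC2 : ∑ i, B (m+1) j i • η' m i = ∑ l, Φ (m+1) (m+1) j l • η' m l := by
        rw [hΦdiag (m+1) (by omega)]
      rw [hA, hB2, hC2]
      have hm1 : (m+1) - 1 = m := by omega
      rw [hm1]
      have hm2 : m = (m - 1) + 1 := by omega
      have htop : ∑ s ∈ Finset.Ioc 0 m, ∑ l, Φ (m+1) (s+1) j l • η' s l
          = (∑ s ∈ Finset.Ioc 0 (m-1), ∑ l, Φ (m+1) (s+1) j l • η' s l)
            + ∑ l, Φ (m+1) (m+1) j l • η' m l := by
        conv_lhs => rw [hm2]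
        rw [Finset.sum_Ioc_succ_top (Nat.zero_le _)]
        rw [← hm2]
      rw [htop]
      abel
  -- norm bound on disagreements
  have hnorm : ∀ k, 1 ≤ k → ∀ j, ‖δ' (k+1) j‖ ≤
      n * (θ * β ^ k * (2*R0)) +
      (2*C*n*θ) * (∑ s ∈ Finset.Ioc 0 k, β ^ (k - s) * α s) + 2*C*α k := by
    intro k hk j
    rw [hunroll k hk j]
    have hb1 : ‖∑ i, Φ k 1 j i • δ' 1 i‖ ≤ n * (θ * β ^ k * (2*R0)) := by
      refine zero_sum_bound _ _ (hδsum 1) _ _ ?_ hδ1b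
      intro i
      have := hΦbound k 1 j i le_rfl hk
      have hke : k - 1 + 1 = k := by omega
      rwa [hke] at this
    have hb2 : ‖∑ s ∈ Finset.Ioc 0 (k-1), ∑ i, Φ k (s+1) j i • η' s i‖ ≤
        (2*C*n*θ) * (∑ s ∈ Finset.Ioc 0 k, β ^ (k - s) * α s) := by
      calc ‖∑ s ∈ Finset.Ioc 0 (k-1), ∑ i, Φ k (s+1) j i • η' s i‖
          ≤ ∑ s ∈ Finset.Ioc 0 (k-1), ‖∑ i, Φ k (s+1) j i • η' s i‖ := norm_sum_le _ _
        _ ≤ ∑ s ∈ Finset.Ioc 0 (k-1), (2*C*n*θ) * (β ^ (k - s) * α s) := by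
            refine Finset.sum_le_sum fun s hs => ?_
            obtain ⟨hs1, hs2⟩ := Finset.mem_Ioc.1 hs
            have hb := zero_sum_bound (fun i => Φ k (s+1) j i) (fun i => η' s i)
              (hηsum s) (θ * β ^ (k - s)) (2 * C * α s) ?_ (fun i => hηb s hs1 i)
            · refine le_trans hb (le_of_eq ?_)
              push_cast
              ring
            · intro i
              have := hΦbound k (s+1) j i (by omega) (by omega)
              have hke : k - (s+1) + 1 = k - s := by omega
              rwa [hke] at this
        _ = (2*C*n*θ) * (∑ s ∈ Finset.Ioc 0 (k-1), β ^ (k - s) * α s) := by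
            rw [Finset.mul_sum]
        _ ≤ (2*C*n*θ) * (∑ s ∈ Finset.Ioc 0 k, β ^ (k - s) * α s) := by
            refine mul_le_mul_of_nonneg_left ?_ (by positivity)
            refine Finset.sum_le_sum_of_subset_of_nonneg
              (Finset.Ioc_subset_Ioc le_rfl (by omega)) ?_
            intro s hs _
            obtain ⟨hs1, _⟩ := Finset.mem_Ioc.1 hs
            exact mul_nonneg (pow_nonneg hβ0.le _) (hαpos s hs1).le
    have hb3 : ‖η' k j‖ ≤ 2*C*α k := hηb k hk j
    calc ‖(∑ i, Φ k 1 j i • δ' 1 i) +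
          (∑ s ∈ Finset.Ioc 0 (k-1), ∑ i, Φ k (s+1) j i • η' s i) + η' k j‖
        ≤ ‖∑ i, Φ k 1 j i • δ' 1 i‖ +
          ‖∑ s ∈ Finset.Ioc 0 (k-1), ∑ i, Φ k (s+1) j i • η' s i‖ + ‖η' k j‖ :=
          norm_add₃_le
      _ ≤ _ := by gcongr
  -- tendsto of the upper bound
  set U : ℕ → ℝ := fun k => n * (θ * β ^ k * (2*R0)) +
      (2*C*n*θ) * (∑ s ∈ Finset.Ioc 0 k, β ^ (k - s) * α s) + 2*C*α k with hUdef
  have hU0 : Tendsto U atTop (nhds 0) := by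
    have h1 : Tendsto (fun k : ℕ => n * (θ * β ^ k * (2*R0))) atTop (nhds 0) := by
      have := (tendsto_pow_atTop_nhds_zero_of_lt_one hβ0.le hβ1)
      have h := ((this.const_mul θ).mul_const (2*R0)).const_mul (n:ℝ)
      simpa using h
    have h2 : Tendsto (fun k : ℕ =>
        (2*C*n*θ) * (∑ s ∈ Finset.Ioc 0 k, β ^ (k - s) * α s)) atTop (nhds 0) := by
      have hc := conv_tendsto α (fun s hs => (hαpos s hs).le) hαle hα0 β hβ0 hβ1
      have h := hc.const_mul (2*C*n*θ)
      simpa using h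
    have h3 : Tendsto (fun k : ℕ => 2*C*α k) atTop (nhds 0) := by
      have h := hα0.const_mul (2*C)
      simpa using h
    have := (h1.add h2).add h3
    simpa using this
  -- the supremum of disagreements
  have hbdd : ∀ k : ℕ, BddAbove (Set.range fun j => ‖δ' k j‖) :=
    fun k => Set.Finite.bddAbove (Set.finite_range _)
  have hsup_le : ∀ k, 1 ≤ k → (⨆ j, ‖δ' (k+1) j‖) ≤ U k :=
    fun k hk => ciSup_le fun j => hnorm k hk j
  have hsup_nonneg : ∀ k, 0 ≤ ⨆ j, ‖δ' k j‖ :=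
    fun k => Real.iSup_nonneg fun j => norm_nonneg _
  have hsup_tendsto : Tendsto (fun k => ⨆ j, ‖δ' k j‖) atTop (nhds 0) := by
    have h : Tendsto (fun k => ⨆ j, ‖δ' (k+1) j‖) atTop (nhds 0) := by
      refine squeeze_zero' ?_ ?_ hU0
      · filter_upwards with k; exact hsup_nonneg (k+1)
      · filter_upwards [eventually_ge_atTop 1] with k hk; exact hsup_le k hk
    exact (tendsto_add_atTop_iff_nat 1).1 h
  constructor
  · exact hsup_tendsto
  · intro i j
    refine squeeze_zero (fun k => norm_nonneg _) (g := fun k => (⨆ l, ‖δ' k l‖) + ⨆ l, ‖δ' k l‖) ?_ ?_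
    · intro k
      have hxij : x k i - x k j = δ' k i - δ' k j := by
        rw [hδ'def]; simp only []; abel
      rw [hxij]
      calc ‖δ' k i - δ' k j‖ ≤ ‖δ' k i‖ + ‖δ' k j‖ := norm_sub_le _ _
        _ ≤ (⨆ l, ‖δ' k l‖) + ⨆ l, ‖δ' k l‖ :=
            add_le_add (le_ciSup (hbdd k) i) (le_ciSup (hbdd k) j)
    · simpa using hsup_tendsto.add hsup_tendsto
end

section
/- Let (E_k), (F_k), (G_k), (H_k) be sequences of nonnegative real numbers such that ∑_{k=0}^∞ F_k < ∞, ∑_{k=0}^∞ H_k < ∞, and E_{k+1} ≤ (1 + F_k) E_k − G_k + H_k for every k. Then the sequence (E_k) converges to a (finite) nonnegative real number, and ∑_{k=0}^∞ G_k < ∞. -/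
/-- Deterministic Robbins–Siegmund convergence result for nonnegative sequences. -/
theorem stmt_5 (E F G H : ℕ → ℝ)
    (hE : ∀ k, 0 ≤ E k) (hF : ∀ k, 0 ≤ F k) (hG : ∀ k, 0 ≤ G k) (hH : ∀ k, 0 ≤ H k)
    (hFsum : Summable F) (hHsum : Summable H)
    (hrec : ∀ k, E (k + 1) ≤ (1 + F k) * E k - G k + H k) :
    (∃ l : ℝ, 0 ≤ l ∧ Filter.Tendsto E Filter.atTop (nhds l)) ∧ Summable G := by
  set P : ℕ → ℝ := fun k => ∏ j ∈ Finset.range k, (1 + F j) with hPdef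
  have hP1 : ∀ k, 1 ≤ P k := by
    intro k
    simp only [hPdef]
    calc (1:ℝ) = ∏ j ∈ Finset.range k, 1 := by simp
      _ ≤ ∏ j ∈ Finset.range k, (1 + F j) :=
        Finset.prod_le_prod (fun j _ => by norm_num) (fun j _ => by linarith [hF j])
  have hPpos : ∀ k, 0 < P k := fun k => lt_of_lt_of_le one_pos (hP1 k)
  have hPsucc : ∀ k, P (k + 1) = P k * (1 + F k) := by
    intro k; simp [hPdef, Finset.prod_range_succ]
  have hPmono : Monotone P := monotone_nat_of_le_succ (fun k => by
    rw [hPsucc]; nlinarith [hPpos k, hF k])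
  set C : ℝ := Real.exp (∑' j, F j) with hCdef
  have hPle : ∀ k, P k ≤ C := by
    intro k
    calc P k ≤ ∏ j ∈ Finset.range k, Real.exp (F j) := by
          apply Finset.prod_le_prod
          · intro j _; linarith [hF j]
          · intro j _; linarith [Real.add_one_le_exp (F j)]
      _ = Real.exp (∑ j ∈ Finset.range k, F j) := (Real.exp_sum _ _).symm
      _ ≤ C := Real.exp_le_exp.mpr (Summable.sum_le_tsum _ (fun j _ => hF j) hFsum)
  have hbdd : BddAbove (Set.range P) := ⟨C, by rintro _ ⟨k, rfl⟩; exact hPle k⟩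
  have hPtend : Filter.Tendsto P Filter.atTop (nhds (⨆ k, P k)) :=
    tendsto_atTop_ciSup hPmono hbdd
  -- key recursion for x k = E k / P k
  set x : ℕ → ℝ := fun k => E k / P k with hxdef
  have hxstep : ∀ k, x (k + 1) ≤ x k - G k / P (k + 1) + H k := by
    intro k
    have hpk := hPpos k
    have hpk1 := hPpos (k + 1)
    have h1 : x (k + 1) ≤ ((1 + F k) * E k - G k + H k) / P (k + 1) :=
      div_le_div_of_nonneg_right (hrec k) hpk1.le
    have h2 : ((1 + F k) * E k) / P (k + 1) = x k := by
      have h0 : (1 + F k) ≠ 0 := ne_of_gt (by linarith [hF k])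
      rw [hPsucc k, mul_comm (P k) (1 + F k)]
      exact mul_div_mul_left _ _ h0
    have h3 : H k / P (k + 1) ≤ H k := by
      rw [div_le_iff₀ hpk1]
      nlinarith [hP1 (k + 1), hH k]
    calc x (k + 1) ≤ ((1 + F k) * E k - G k + H k) / P (k + 1) := h1
      _ = ((1 + F k) * E k) / P (k + 1) - G k / P (k + 1) + H k / P (k + 1) := by ring
      _ ≤ x k - G k / P (k + 1) + H k := by linarith
  set S : ℕ → ℝ := fun k => ∑ j ∈ Finset.range k, H j with hSdef
  set Z : ℕ → ℝ := fun k => x k - S k with hZdef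
  have hZstep : ∀ k, Z (k + 1) + G k / P (k + 1) ≤ Z k := by
    intro k
    have := hxstep k
    have hS : S (k + 1) = S k + H k := Finset.sum_range_succ _ _
    simp only [hZdef]
    rw [hS]
    linarith
  have hQnonneg : ∀ k, 0 ≤ G k / P (k + 1) := fun k => div_nonneg (hG k) (hPpos (k+1)).le
  have hZanti : Antitone Z := antitone_nat_of_succ_le (fun k =>
    (le_add_of_nonneg_right (hQnonneg k)).trans (hZstep k))
  have hSle : ∀ k, S k ≤ ∑' j, H j := fun k => Summable.sum_le_tsum _ (fun j _ => hH j) hHsum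
  have hxnonneg : ∀ k, 0 ≤ x k := fun k => div_nonneg (hE k) (hPpos k).le
  have hZlb : ∀ k, -(∑' j, H j) ≤ Z k := by
    intro k
    have := hSle k; have := hxnonneg k
    simp only [hZdef]; linarith
  have hbddZ : BddBelow (Set.range Z) := ⟨-(∑' j, H j), by rintro _ ⟨k, rfl⟩; exact hZlb k⟩
  have hZtend : Filter.Tendsto Z Filter.atTop (nhds (⨅ k, Z k)) :=
    tendsto_atTop_ciInf hZanti hbddZ
  clear_value P x S Z
  -- summability of G
  have htel : ∀ n, (∑ k ∈ Finset.range n, G k / P (k + 1)) + Z n ≤ Z 0 := by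
    intro n
    induction n with
    | zero => simp
    | succ n ih =>
      rw [Finset.sum_range_succ]
      have := hZstep n
      linarith
  have hQsum : Summable (fun k => G k / P (k + 1)) := by
    apply summable_of_sum_range_le hQnonneg (c := Z 0 + ∑' j, H j)
    intro n
    nlinarith [htel n, hZlb n]
  have hGsum : Summable G := by
    apply Summable.of_nonneg_of_le hG (fun k => ?_) (hQsum.mul_right C)
    have : G k / P (k + 1) * P (k + 1) = G k := div_mul_cancel₀ _ (hPpos (k+1)).ne'
    calc G k = G k / P (k + 1) * P (k + 1) := this.symm
      _ ≤ G k / P (k + 1) * C := by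
          apply mul_le_mul_of_nonneg_left (hPle (k+1)) (hQnonneg k)
  refine ⟨?_, hGsum⟩
  -- convergence of E
  have hStend : Filter.Tendsto S Filter.atTop (nhds (∑' j, H j)) := by
    rw [hSdef]; exact hHsum.hasSum.tendsto_sum_nat
  have hxtend : Filter.Tendsto x Filter.atTop (nhds ((⨅ k, Z k) + ∑' j, H j)) := by
    have : x = fun k => Z k + S k := by
      funext k; simp [hZdef]
    rw [this]
    exact hZtend.add hStend
  have hEeq : ∀ k, E k = x k * P k := by
    intro k; simp only [hxdef]; field_simp [(hPpos k).ne']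
  have hEtend : Filter.Tendsto E Filter.atTop
      (nhds (((⨅ k, Z k) + ∑' j, H j) * ⨆ k, P k)) := by
    have := hxtend.mul hPtend
    refine this.congr (fun k => (hEeq k).symm)
  exact ⟨_, ge_of_tendsto' hEtend hE, hEtend⟩
end
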